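/- The improper integral P₁(c) = ∫₀¹ dx/√(x(1-x)(1-cx)), for c ∈ ℂ \ ℝ_{≥0}, converges and satisfies the hypergeometric differential equation c(1-c)P'' + (1-2c)P' - (1/4)P = 0. -/

import Mathlib

open MeasureTheory Metric Set Complex intervalIntegral
open scoped Interval

/-- The elliptic period integral `P₁(c) = ∫₀¹ dx / √(x(1-x)(1-cx))` of the Legendre family,
using the (fixed) principal branch of the square root. -/
noncomputable def P1 (c : ℂ) : ℂ :=
  ∫ x in (0:ℝ)..1, ((x : ℂ) * (1 - (x : ℂ)) * (1 - c * (x : ℂ))) ^ (-(1/2 : ℂ))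

namespace EP

def U : Set ℂ := {z | ∀ r : ℝ, 0 ≤ r → z ≠ (r : ℂ)}

lemma isOpen_U : IsOpen U := by
  have h : U = (Complex.ofReal '' Set.Ici 0)ᶜ := by
    ext z
    simp only [U, Set.mem_compl_iff, Set.mem_image, Set.mem_Ici, Set.mem_setOf_eq, not_exists]
    constructor
    · intro h r ⟨hr, he⟩
      exact h r hr he.symm
    · intro h r hr he
      exact h r ⟨hr, he.symm⟩
  rw [h]
  exact (Complex.isometry_ofReal.isClosedEmbedding.isClosedMap _ isClosed_Ici).isOpen_compl

lemma one_sub_ne {z : ℂ} (hz : z ∈ U) {x : ℝ} (hx : 0 ≤ x) : 1 - z * (x : ℂ) ≠ 0 := by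
  intro h
  have hx0 : x ≠ 0 := by
    rintro rfl
    simp at h
  have hxx : (0:ℝ) < x := lt_of_le_of_ne hx (Ne.symm hx0)
  have : z = ((x⁻¹ : ℝ) : ℂ) := by
    have hxc : (x : ℂ) ≠ 0 := by exact_mod_cast hx0
    rw [Complex.ofReal_inv]
    field_simp
    linear_combination -h
  exact hz x⁻¹ (inv_nonneg.mpr hx) this

lemma slit {z : ℂ} (hz : z ∈ U) {x : ℝ} (h0 : 0 < x) (h1 : x < 1) :
    ((x:ℂ) * (1 - (x:ℂ)) * (1 - z * (x:ℂ))) ∈ Complex.slitPlane := by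
  have ht : (0:ℝ) < x * (1 - x) := mul_pos h0 (by linarith)
  have hre : ((x:ℂ) * (1 - (x:ℂ)) * (1 - z * (x:ℂ))).re = (x * (1-x)) * (1 - z.re * x) := by
    simp [Complex.mul_re, Complex.mul_im, Complex.sub_re, Complex.sub_im]
  have him : ((x:ℂ) * (1 - (x:ℂ)) * (1 - z * (x:ℂ))).im = (x * (1-x)) * (-(z.im * x)) := by
    simp [Complex.mul_re, Complex.mul_im, Complex.sub_re, Complex.sub_im]
  rw [Complex.mem_slitPlane_iff]
  by_cases hzi : z.im = 0
  · left
    have hzre : z.re < 0 := by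
      by_contra hzr
      push_neg at hzr
      exact hz z.re hzr (by exact Complex.ext rfl hzi)
    rw [hre]
    have : 0 < 1 - z.re * x := by nlinarith
    positivity
  · right
    rw [him]
    intro h
    rcases mul_eq_zero.mp h with h' | h'
    · exact absurd h' (ne_of_gt ht)
    · simp only [neg_eq_zero, mul_eq_zero] at h'
      rcases h' with h' | h'
      · exact hzi h'
      · exact absurd h' (ne_of_gt h0)

lemma A_ne {z : ℂ} (hz : z ∈ U) {x : ℝ} (h0 : 0 < x) (h1 : x < 1) :
    ((x:ℂ) * (1 - (x:ℂ)) * (1 - z * (x:ℂ))) ≠ 0 :=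
  Complex.slitPlane_ne_zero (slit hz h0 h1)

lemma norm_A_cpow (z : ℂ) {x : ℝ} (h0 : 0 ≤ x) (h1 : x ≤ 1) (r : ℝ) :
    ‖((x:ℂ) * (1 - (x:ℂ)) * (1 - z * (x:ℂ))) ^ ((r:ℝ) : ℂ)‖
      = (x * (1-x)) ^ r * ‖1 - z * (x:ℂ)‖ ^ r := by
  have h : ((x:ℂ) * (1 - (x:ℂ)) * (1 - z * (x:ℂ)))
      = (((x * (1-x) : ℝ)) : ℂ) * (1 - z * (x:ℂ)) := by push_cast; ring
  rw [h, Complex.norm_cpow_real, norm_mul, Complex.norm_real, Real.norm_eq_abs,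
    Real.mul_rpow (abs_nonneg _) (norm_nonneg _), _root_.abs_of_nonneg (by nlinarith)]

lemma exists_ball_bound {c : ℂ} (hc : c ∈ U) :
    ∃ ε > 0, ∃ δ > 0, Metric.closedBall c ε ⊆ U ∧
      ∀ z ∈ Metric.closedBall c ε, ∀ x ∈ Set.Icc (0:ℝ) 1, δ ≤ ‖1 - z * (x:ℂ)‖ := by
  obtain ⟨ε', hε', hball⟩ := Metric.isOpen_iff.mp isOpen_U c hc
  have hsub : Metric.closedBall c (ε'/2) ⊆ U :=
    (Metric.closedBall_subset_ball (by linarith)).trans hball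
  set K : Set (ℂ × ℝ) := Metric.closedBall c (ε'/2) ×ˢ Set.Icc (0:ℝ) 1 with hK
  have hKc : IsCompact K := (isCompact_closedBall _ _).prod isCompact_Icc
  have hKne : K.Nonempty := ⟨(c, 0), by
    constructor
    · exact Metric.mem_closedBall_self (by linarith)
    · exact ⟨le_refl 0, zero_le_one⟩⟩
  have hcont : ContinuousOn (fun p : ℂ × ℝ => ‖1 - p.1 * (p.2 : ℂ)‖) K :=
    ((continuous_const.sub (continuous_fst.mul
      (Complex.continuous_ofReal.comp continuous_snd))).norm).continuousOn
  obtain ⟨p₀, hp₀, hmin⟩ := hKc.exists_isMinOn hKne hcont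
  refine ⟨ε'/2, by linarith, ‖1 - p₀.1 * (p₀.2 : ℂ)‖, ?_, hsub, ?_⟩
  · have : 1 - p₀.1 * (p₀.2 : ℂ) ≠ 0 := one_sub_ne (hsub hp₀.1) hp₀.2.1
    simpa [norm_pos_iff] using this
  · intro z hz x hx
    exact isMinOn_iff.mp hmin (z, x) ⟨hz, hx⟩



noncomputable def B (x : ℝ) : ℝ := (x * (1-x)) ^ (-(1/2) : ℝ)

lemma ae_uIoc {P : ℝ → Prop} (h : ∀ x : ℝ, 0 < x → x < 1 → P x) :
    ∀ᵐ x ∂(volume.restrict (Ι (0:ℝ) 1)), P x := by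
  rw [Set.uIoc_of_le zero_le_one]
  have h1 : ∀ᵐ x ∂(volume.restrict (Set.Ioc (0:ℝ) 1)), x ∈ Set.Ioc (0:ℝ) 1 :=
    ae_restrict_mem measurableSet_Ioc
  have h2 : ∀ᵐ x ∂(volume.restrict (Set.Ioc (0:ℝ) 1)), x ≠ 1 :=
    ae_restrict_of_ae (by simpa using (Set.countable_singleton (1:ℝ)).ae_notMem volume)
  filter_upwards [h1, h2] with x hx hne
  exact h x hx.1 (lt_of_le_of_ne hx.2 hne)

lemma ae_imp {P : ℝ → Prop} (h : ∀ x : ℝ, 0 < x → x < 1 → P x) :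
    ∀ᵐ x ∂(volume : Measure ℝ), x ∈ Ι (0:ℝ) 1 → P x := by
  filter_upwards [(Set.countable_singleton (1:ℝ)).ae_notMem volume] with x hx hmem
  rw [Set.uIoc_of_le zero_le_one] at hmem
  exact h x hmem.1 (lt_of_le_of_ne hmem.2 (by simpa using hx))

lemma measB : Measurable B :=
  (measurable_id.mul (measurable_const.sub measurable_id)).pow measurable_const

lemma intB : IntervalIntegrable B volume 0 1 := by
  have hbeta := Complex.betaIntegral_convergent (u := 1/2) (v := 1/2) (by norm_num) (by norm_num)
  have hbn : IntervalIntegrable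
      (fun x : ℝ => ‖(x:ℂ) ^ ((1/2:ℂ)-1) * (1 - (x:ℂ)) ^ ((1/2:ℂ)-1)‖) volume 0 1 :=
    ⟨hbeta.1.norm, hbeta.2.norm⟩
  refine hbn.mono_fun' measB.aestronglyMeasurable ?_
  refine ae_uIoc (fun x h0 h1 => ?_)
  have he : ((1/2:ℂ)-1) = ((-(1/2) : ℝ) : ℂ) := by norm_num
  have hx1 : (1 - (x:ℂ)) = ((1-x : ℝ) : ℂ) := by push_cast; ring
  have : ‖(x:ℂ) ^ ((1/2:ℂ)-1) * (1 - (x:ℂ)) ^ ((1/2:ℂ)-1)‖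
      = x ^ (-(1/2) : ℝ) * (1-x) ^ (-(1/2) : ℝ) := by
    rw [he, hx1, norm_mul, Complex.norm_cpow_real, Complex.norm_cpow_real,
      Complex.norm_real, Complex.norm_real, Real.norm_eq_abs, Real.norm_eq_abs,
      _root_.abs_of_nonneg h0.le, _root_.abs_of_nonneg (by linarith : (0:ℝ) ≤ 1 - x)]
  dsimp only
  rw [this, B, Real.mul_rpow h0.le (by linarith), Real.norm_eq_abs,
    _root_.abs_of_nonneg (mul_nonneg (Real.rpow_nonneg h0.le _) (Real.rpow_nonneg (by linarith) _))]



noncomputable def F0 (z : ℂ) (x : ℝ) : ℂ :=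
  ((x:ℂ) * (1 - (x:ℂ)) * (1 - z * (x:ℂ))) ^ (-(1/2:ℂ))

noncomputable def F1 (z : ℂ) (x : ℝ) : ℂ :=
  (1/2 : ℂ) * ((x:ℂ)^2 * (1 - (x:ℂ))) * ((x:ℂ) * (1 - (x:ℂ)) * (1 - z * (x:ℂ))) ^ (-(1/2:ℂ) - 1)

noncomputable def F2 (z : ℂ) (x : ℝ) : ℂ :=
  (3/4 : ℂ) * ((x:ℂ)^4 * (1 - (x:ℂ))^2) *
    ((x:ℂ) * (1 - (x:ℂ)) * (1 - z * (x:ℂ))) ^ (-(1/2:ℂ) - 2)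

lemma measF0 (z : ℂ) : Measurable (F0 z) := by
  apply Measurable.pow _ measurable_const
  fun_prop

lemma measF1 (z : ℂ) : Measurable (F1 z) := by
  apply Measurable.mul (by fun_prop)
  apply Measurable.pow _ measurable_const
  fun_prop

lemma measF2 (z : ℂ) : Measurable (F2 z) := by
  apply Measurable.mul (by fun_prop)
  apply Measurable.pow _ measurable_const
  fun_prop

lemma normF0_le {z : ℂ} {δ x : ℝ} (hδ0 : 0 < δ) (hδ : δ ≤ ‖1 - z * (x:ℂ)‖)
    (h0 : 0 < x) (h1 : x < 1) : ‖F0 z x‖ ≤ δ ^ (-(1/2) : ℝ) * B x := by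
  have he : (-(1/2:ℂ)) = ((-(1/2) : ℝ) : ℂ) := by norm_num
  rw [F0, he, norm_A_cpow z h0.le h1.le]
  rw [mul_comm (δ ^ (-(1/2):ℝ)) (B x), B]
  apply mul_le_mul_of_nonneg_left _ (Real.rpow_nonneg (by nlinarith) _)
  exact Real.rpow_le_rpow_of_nonpos hδ0 hδ (by norm_num)

lemma normF1_le {z : ℂ} {δ x : ℝ} (hδ0 : 0 < δ) (hδ : δ ≤ ‖1 - z * (x:ℂ)‖)
    (h0 : 0 < x) (h1 : x < 1) : ‖F1 z x‖ ≤ (1/2) * δ ^ (-(3/2) : ℝ) * B x := by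
  have he : (-(1/2:ℂ) - 1) = ((-(3/2) : ℝ) : ℂ) := by norm_num
  have ht : (0:ℝ) < x * (1-x) := mul_pos h0 (by linarith)
  have hc : ((1/2 : ℂ) * ((x:ℂ)^2 * (1 - (x:ℂ)))) = (((1/2) * (x^2 * (1-x)) : ℝ) : ℂ) := by
    push_cast; ring
  rw [F1, mul_assoc] at *
  rw [← mul_assoc, hc, he, norm_mul, norm_A_cpow z h0.le h1.le, Complex.norm_real,
    Real.norm_eq_abs, _root_.abs_of_nonneg (by nlinarith : (0:ℝ) ≤ (1/2) * (x^2*(1-x)))]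
  have hb1 : ‖1 - z * (x:ℂ)‖ ^ (-(3/2):ℝ) ≤ δ ^ (-(3/2):ℝ) :=
    Real.rpow_le_rpow_of_nonpos hδ0 hδ (by norm_num)
  have hkey : (1/2) * (x^2*(1-x)) * ((x * (1-x)) ^ (-(3/2):ℝ)) ≤ (1/2) * (x*(1-x)) ^ (-(1/2):ℝ) := by
    have e1 : x^2*(1-x) * ((x * (1-x)) ^ (-(3/2):ℝ)) = x * ((x*(1-x)) * (x*(1-x)) ^ (-(3/2):ℝ)) := by
      ring
    have e2 : (x*(1-x)) * (x*(1-x)) ^ (-(3/2):ℝ) = (x*(1-x)) ^ (-(1/2):ℝ) := by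
      nth_rewrite 1 [← Real.rpow_one (x*(1-x))]
      rw [← Real.rpow_add ht]
      norm_num
    rw [mul_assoc, e1, e2]
    have : x * (x*(1-x)) ^ (-(1/2):ℝ) ≤ 1 * (x*(1-x)) ^ (-(1/2):ℝ) :=
      mul_le_mul_of_nonneg_right (by linarith) (Real.rpow_nonneg ht.le _)
    linarith
  calc (1/2) * (x^2*(1-x)) * ((x*(1-x)) ^ (-(3/2):ℝ) * ‖1 - z * (x:ℂ)‖ ^ (-(3/2):ℝ))
      ≤ (1/2) * (x^2*(1-x)) * ((x*(1-x)) ^ (-(3/2):ℝ) * δ ^ (-(3/2):ℝ)) := by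
        apply mul_le_mul_of_nonneg_left _ (by nlinarith)
        exact mul_le_mul_of_nonneg_left hb1 (Real.rpow_nonneg ht.le _)
    _ = ((1/2) * (x^2*(1-x)) * ((x*(1-x)) ^ (-(3/2):ℝ))) * δ ^ (-(3/2):ℝ) := by ring
    _ ≤ ((1/2) * (x*(1-x)) ^ (-(1/2):ℝ)) * δ ^ (-(3/2):ℝ) :=
        mul_le_mul_of_nonneg_right hkey (Real.rpow_nonneg hδ0.le _)
    _ = (1/2) * δ ^ (-(3/2):ℝ) * B x := by rw [B]; ring

lemma normF2_le {z : ℂ} {δ x : ℝ} (hδ0 : 0 < δ) (hδ : δ ≤ ‖1 - z * (x:ℂ)‖)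
    (h0 : 0 < x) (h1 : x < 1) : ‖F2 z x‖ ≤ (3/4) * δ ^ (-(5/2) : ℝ) * B x := by
  have he : (-(1/2:ℂ) - 2) = ((-(5/2) : ℝ) : ℂ) := by norm_num
  have ht : (0:ℝ) < x * (1-x) := mul_pos h0 (by linarith)
  have hc : ((3/4 : ℂ) * ((x:ℂ)^4 * (1 - (x:ℂ))^2)) = (((3/4) * (x^4 * (1-x)^2) : ℝ) : ℂ) := by
    push_cast; ring
  rw [F2, hc, he, norm_mul, norm_A_cpow z h0.le h1.le, Complex.norm_real,
    Real.norm_eq_abs, _root_.abs_of_nonneg (by positivity : (0:ℝ) ≤ (3/4) * (x^4*(1-x)^2))]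
  have hb1 : ‖1 - z * (x:ℂ)‖ ^ (-(5/2):ℝ) ≤ δ ^ (-(5/2):ℝ) :=
    Real.rpow_le_rpow_of_nonpos hδ0 hδ (by norm_num)
  have hkey : (3/4) * (x^4*(1-x)^2) * ((x * (1-x)) ^ (-(5/2):ℝ)) ≤ (3/4) * (x*(1-x)) ^ (-(1/2):ℝ) := by
    have e1 : x^4*(1-x)^2 * ((x * (1-x)) ^ (-(5/2):ℝ))
        = x^2 * ((x*(1-x))^2 * (x*(1-x)) ^ (-(5/2):ℝ)) := by ring
    have e2 : (x*(1-x))^2 * (x*(1-x)) ^ (-(5/2):ℝ) = (x*(1-x)) ^ (-(1/2):ℝ) := by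
      rw [← Real.rpow_natCast (x*(1-x)) 2, ← Real.rpow_add ht]
      norm_num
    rw [mul_assoc, e1, e2]
    have hx2 : x^2 ≤ 1 := by nlinarith
    have : x^2 * (x*(1-x)) ^ (-(1/2):ℝ) ≤ 1 * (x*(1-x)) ^ (-(1/2):ℝ) :=
      mul_le_mul_of_nonneg_right hx2 (Real.rpow_nonneg ht.le _)
    linarith
  calc (3/4) * (x^4*(1-x)^2) * ((x*(1-x)) ^ (-(5/2):ℝ) * ‖1 - z * (x:ℂ)‖ ^ (-(5/2):ℝ))
      ≤ (3/4) * (x^4*(1-x)^2) * ((x*(1-x)) ^ (-(5/2):ℝ) * δ ^ (-(5/2):ℝ)) := by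
        apply mul_le_mul_of_nonneg_left _ (by positivity)
        exact mul_le_mul_of_nonneg_left hb1 (Real.rpow_nonneg ht.le _)
    _ = ((3/4) * (x^4*(1-x)^2) * ((x*(1-x)) ^ (-(5/2):ℝ))) * δ ^ (-(5/2):ℝ) := by ring
    _ ≤ ((3/4) * (x*(1-x)) ^ (-(1/2):ℝ)) * δ ^ (-(5/2):ℝ) :=
        mul_le_mul_of_nonneg_right hkey (Real.rpow_nonneg hδ0.le _)
    _ = (3/4) * δ ^ (-(5/2):ℝ) * B x := by rw [B]; ring

lemma hasDerivAt_A (z : ℂ) (x : ℝ) :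
    HasDerivAt (fun w : ℂ => (x:ℂ) * (1 - (x:ℂ)) * (1 - w * (x:ℂ)))
      (-((x:ℂ) * (1 - (x:ℂ)) * (x:ℂ))) z := by
  have h : HasDerivAt (fun w : ℂ => 1 - w * (x:ℂ)) (-(x:ℂ)) z := by
    simpa using ((hasDerivAt_id z).mul_const (x:ℂ)).const_sub 1
  have h2 := h.const_mul ((x:ℂ) * (1 - (x:ℂ)))
  exact h2.congr_deriv (by ring)

lemma hasDerivAt_F0 {z : ℂ} (hz : z ∈ U) {x : ℝ} (h0 : 0 < x) (h1 : x < 1) :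
    HasDerivAt (fun w => F0 w x) (F1 z x) z := by
  have h := (hasDerivAt_A z x).cpow_const (c := -(1/2:ℂ)) (slit hz h0 h1)
  simp only [F0]
  convert h using 1
  rw [F1]; ring

lemma hasDerivAt_F1 {z : ℂ} (hz : z ∈ U) {x : ℝ} (h0 : 0 < x) (h1 : x < 1) :
    HasDerivAt (fun w => F1 w x) (F2 z x) z := by
  have h := ((hasDerivAt_A z x).cpow_const (c := -(1/2:ℂ) - 1) (slit hz h0 h1)).const_mul
    ((1/2:ℂ) * ((x:ℂ)^2 * (1 - (x:ℂ))))
  simp only [F1]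
  refine h.congr_deriv ?_
  rw [F2, show (-(1/2:ℂ) - 1 - 1) = -(1/2:ℂ) - 2 from by ring]
  ring

noncomputable def G (c : ℂ) (x : ℝ) : ℂ :=
  -(1/2:ℂ) * ((x:ℂ)^2 * (1-(x:ℂ))^2) * ((x:ℂ) * (1-(x:ℂ)) * (1 - c * (x:ℂ))) ^ (-(1/2:ℂ)-1)

lemma hasDerivAt_G {c : ℂ} (hc : c ∈ U) {x : ℝ} (h0 : 0 < x) (h1 : x < 1) :
    HasDerivAt (fun y : ℝ => G c y)
      (c * (1-c) * F2 c x + (1 - 2*c) * F1 c x - (1/4:ℂ) * F0 c x) x := by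
  have hψ : HasDerivAt (fun w : ℂ => w * (1-w) * (1 - c*w))
      ((1 - 2*(x:ℂ)) * (1 - c*(x:ℂ)) + (x:ℂ) * (1-(x:ℂ)) * (-c)) (x:ℂ) := by
    have ha : HasDerivAt (fun w : ℂ => w * (1-w)) (1 - 2*(x:ℂ)) (x:ℂ) := by
      have := (hasDerivAt_id (x:ℂ)).mul ((hasDerivAt_id (x:ℂ)).const_sub 1)
      convert this using 1
      all_goals first
      | rfl
      | (simp; ring)
      | simp
      | ring
    have hb : HasDerivAt (fun w : ℂ => 1 - c*w) (-c) (x:ℂ) := by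
      simpa using ((hasDerivAt_id (x:ℂ)).const_mul c).const_sub 1
    have := ha.mul hb
    convert this using 1
    all_goals first
    | rfl
    | (simp; ring)
    | simp
    | ring
  have hp : HasDerivAt (fun w : ℂ => -(1/2:ℂ) * (w^2 * (1-w)^2))
      (-(1/2:ℂ) * (2*(x:ℂ)*(1-(x:ℂ))^2 - 2*(x:ℂ)^2*(1-(x:ℂ)))) (x:ℂ) := by
    have := (((hasDerivAt_id (x:ℂ)).pow 2).mul
      (((hasDerivAt_id (x:ℂ)).const_sub 1).pow 2)).const_mul (-(1/2:ℂ))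
    convert this using 1
    all_goals first
    | rfl
    | (simp; ring)
    | simp
    | ring
  have hslit : ((x:ℂ) * (1-(x:ℂ)) * (1 - c*(x:ℂ))) ∈ Complex.slitPlane := slit hc h0 h1
  have hcp := hψ.cpow_const (c := -(1/2:ℂ) - 1) hslit
  have hG := (hp.mul hcp).comp_ofReal (z := x)
  simp only [G]
  convert hG using 1
  · rfl
  have hAne : ((x:ℂ) * (1-(x:ℂ)) * (1 - c*(x:ℂ))) ≠ 0 := A_ne hc h0 h1
  have hE0 : ((x:ℂ) * (1-(x:ℂ)) * (1 - c*(x:ℂ))) ^ (-(1/2:ℂ))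
      = ((x:ℂ) * (1-(x:ℂ)) * (1 - c*(x:ℂ)))^2 *
        ((x:ℂ) * (1-(x:ℂ)) * (1 - c*(x:ℂ))) ^ (-(1/2:ℂ)-2) := by
    conv_lhs => rw [show (-(1/2:ℂ)) = ((2:ℕ):ℂ) + (-(1/2:ℂ)-2) from by push_cast; ring,
      Complex.cpow_add _ _ hAne, Complex.cpow_natCast]
  have hE1 : ((x:ℂ) * (1-(x:ℂ)) * (1 - c*(x:ℂ))) ^ (-(1/2:ℂ)-1)
      = ((x:ℂ) * (1-(x:ℂ)) * (1 - c*(x:ℂ))) *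
        ((x:ℂ) * (1-(x:ℂ)) * (1 - c*(x:ℂ))) ^ (-(1/2:ℂ)-2) := by
    conv_lhs => rw [show (-(1/2:ℂ)-1) = (1:ℂ) + (-(1/2:ℂ)-2) from by ring,
      Complex.cpow_add _ _ hAne, Complex.cpow_one]
  have hE2 : ((x:ℂ) * (1-(x:ℂ)) * (1 - c*(x:ℂ))) ^ (-(1/2:ℂ)-1-1)
      = ((x:ℂ) * (1-(x:ℂ)) * (1 - c*(x:ℂ))) ^ (-(1/2:ℂ)-2) := by
    norm_num
  rw [F0, F1, F2, hE0, hE1, hE2]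
  ring

lemma normG_le {c : ℂ} {δ x : ℝ} (hδ0 : 0 < δ) (hδ : δ ≤ ‖1 - c * (x:ℂ)‖)
    (h0 : 0 < x) (h1 : x < 1) :
    ‖G c x‖ ≤ (1/2) * δ ^ (-(3/2) : ℝ) * Real.sqrt (x * (1-x)) := by
  have ht : (0:ℝ) < x * (1-x) := mul_pos h0 (by linarith)
  have hc' : (-(1/2:ℂ) * ((x:ℂ)^2 * (1-(x:ℂ))^2)) = (((-(1/2)) * (x^2*(1-x)^2) : ℝ) : ℂ) := by
    push_cast; ring
  have he : (-(1/2:ℂ) - 1) = ((-(3/2) : ℝ) : ℂ) := by norm_num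
  rw [G, hc', he, norm_mul, norm_A_cpow c h0.le h1.le, Complex.norm_real, Real.norm_eq_abs]
  have habs : |(-(1/2)) * (x^2*(1-x)^2)| = (1/2) * (x^2*(1-x)^2) := by
    rw [_root_.abs_of_nonpos (by nlinarith)]; ring
  rw [habs]
  have hb1 : ‖1 - c * (x:ℂ)‖ ^ (-(3/2):ℝ) ≤ δ ^ (-(3/2):ℝ) :=
    Real.rpow_le_rpow_of_nonpos hδ0 hδ (by norm_num)
  have e2 : (x^2*(1-x)^2) * (x*(1-x)) ^ (-(3/2):ℝ) = Real.sqrt (x*(1-x)) := by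
    rw [Real.sqrt_eq_rpow, show x^2*(1-x)^2 = (x*(1-x))^(2:ℕ) from by ring,
      ← Real.rpow_natCast (x*(1-x)) 2, ← Real.rpow_add ht]
    norm_num
  calc (1/2) * (x^2*(1-x)^2) * ((x*(1-x)) ^ (-(3/2):ℝ) * ‖1 - c * (x:ℂ)‖ ^ (-(3/2):ℝ))
      ≤ (1/2) * (x^2*(1-x)^2) * ((x*(1-x)) ^ (-(3/2):ℝ) * δ ^ (-(3/2):ℝ)) := by
        apply mul_le_mul_of_nonneg_left _ (by positivity)
        exact mul_le_mul_of_nonneg_left hb1 (Real.rpow_nonneg ht.le _)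
    _ = (1/2) * ((x^2*(1-x)^2) * (x*(1-x)) ^ (-(3/2):ℝ)) * δ ^ (-(3/2):ℝ) := by ring
    _ = (1/2) * δ ^ (-(3/2):ℝ) * Real.sqrt (x*(1-x)) := by rw [e2]; ring

lemma tendstoG {c : ℂ} (hc : c ∈ U) {a : ℝ} (ha : a * (1-a) = 0) (h01 : a = 0 ∨ a = 1)
    (l : Filter ℝ) (hl : l ≤ nhds a) (hIoo : Set.Ioo (0:ℝ) 1 ∈ l) :
    Filter.Tendsto (G c) l (nhds 0) := by
  obtain ⟨ε, hε, δ, hδ0, hsub, hbound⟩ := exists_ball_bound hc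
  apply squeeze_zero_norm' (a := fun x => (1/2) * δ ^ (-(3/2):ℝ) * Real.sqrt (x * (1-x)))
  · filter_upwards [hIoo] with x hx
    exact normG_le hδ0 (hbound c (Metric.mem_closedBall_self hε.le) x ⟨hx.1.le, hx.2.le⟩)
      hx.1 hx.2
  · have hcont : Continuous (fun x : ℝ => (1/2) * δ ^ (-(3/2):ℝ) * Real.sqrt (x * (1-x))) := by
      continuity
    have := (hcont.tendsto a).mono_left hl
    convert this using 2
    rw [ha, Real.sqrt_zero, mul_zero]

lemma intF0' {z : ℂ} (hz : z ∈ U) : IntervalIntegrable (F0 z) volume 0 1 := by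
  obtain ⟨ε, hε, δ, hδ0, hsub, hbound⟩ := exists_ball_bound hz
  refine (intB.const_mul (δ ^ (-(1/2):ℝ))).mono_fun' (measF0 z).aestronglyMeasurable ?_
  refine ae_uIoc (fun x h0 h1 => ?_)
  exact normF0_le hδ0 (hbound z (Metric.mem_closedBall_self hε.le) x ⟨h0.le, h1.le⟩) h0 h1

lemma d1 {c : ℂ} (hc : c ∈ U) : IntervalIntegrable (F1 c) volume 0 1 ∧
    HasDerivAt (fun z => ∫ x in (0:ℝ)..1, F0 z x) (∫ x in (0:ℝ)..1, F1 c x) c := by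
  obtain ⟨ε, hε, δ, hδ0, hsub, hbound⟩ := exists_ball_bound hc
  apply intervalIntegral.hasDerivAt_integral_of_dominated_loc_of_deriv_le
    (bound := fun x => (1/2) * δ ^ (-(3/2):ℝ) * B x) (Metric.ball_mem_nhds c hε)
  · filter_upwards with z using (measF0 z).aestronglyMeasurable
  · exact intF0' hc
  · exact (measF1 c).aestronglyMeasurable
  · refine ae_imp (fun x h0 h1 => fun z hz => ?_)
    exact normF1_le hδ0 (hbound z (Metric.ball_subset_closedBall hz) x ⟨h0.le, h1.le⟩) h0 h1
  · exact intB.const_mul _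
  · refine ae_imp (fun x h0 h1 => fun z hz => ?_)
    exact hasDerivAt_F0 (hsub (Metric.ball_subset_closedBall hz)) h0 h1

lemma d2 {c : ℂ} (hc : c ∈ U) : IntervalIntegrable (F2 c) volume 0 1 ∧
    HasDerivAt (fun z => ∫ x in (0:ℝ)..1, F1 z x) (∫ x in (0:ℝ)..1, F2 c x) c := by
  obtain ⟨ε, hε, δ, hδ0, hsub, hbound⟩ := exists_ball_bound hc
  apply intervalIntegral.hasDerivAt_integral_of_dominated_loc_of_deriv_le
    (bound := fun x => (3/4) * δ ^ (-(5/2):ℝ) * B x) (Metric.ball_mem_nhds c hε)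
  · filter_upwards with z using (measF1 z).aestronglyMeasurable
  · exact (d1 hc).1
  · exact (measF2 c).aestronglyMeasurable
  · refine ae_imp (fun x h0 h1 => fun z hz => ?_)
    exact normF2_le hδ0 (hbound z (Metric.ball_subset_closedBall hz) x ⟨h0.le, h1.le⟩) h0 h1
  · exact intB.const_mul _
  · refine ae_imp (fun x h0 h1 => fun z hz => ?_)
    exact hasDerivAt_F1 (hsub (Metric.ball_subset_closedBall hz)) h0 h1

noncomputable def Q (z : ℂ) : ℂ := ∫ x in (0:ℝ)..1, F1 z x
noncomputable def R (z : ℂ) : ℂ := ∫ x in (0:ℝ)..1, F2 z x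

lemma sum_zero {c : ℂ} (hc : c ∈ U) :
    c * (1-c) * R c + (1 - 2*c) * Q c - (1/4:ℂ) * (∫ x in (0:ℝ)..1, F0 c x) = 0 := by
  have hint0 := intF0' hc
  have hint1 := (d1 hc).1
  have hint2 := (d2 hc).1
  have hcomb : IntervalIntegrable
      (fun x => c * (1-c) * F2 c x + (1 - 2*c) * F1 c x - (1/4:ℂ) * F0 c x) volume 0 1 :=
    ((hint2.const_mul _).add (hint1.const_mul _)).sub (hint0.const_mul _)
  have h0 : Filter.Tendsto (G c) (nhdsWithin (0:ℝ) (Set.Ioi 0)) (nhds 0) := by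
    refine tendstoG hc (by norm_num) (Or.inl rfl) _ nhdsWithin_le_nhds ?_
    exact Ioo_mem_nhdsGT zero_lt_one
  have h1 : Filter.Tendsto (G c) (nhdsWithin (1:ℝ) (Set.Iio 1)) (nhds 0) := by
    refine tendstoG hc (by norm_num) (Or.inr rfl) _ nhdsWithin_le_nhds ?_
    exact Ioo_mem_nhdsLT zero_lt_one
  have hFTC := intervalIntegral.integral_eq_sub_of_hasDerivAt_of_tendsto zero_lt_one
    (fun x hx => hasDerivAt_G hc hx.1 hx.2) hcomb h0 h1
  rw [intervalIntegral.integral_sub ((hint2.const_mul _).add (hint1.const_mul _))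
      (hint0.const_mul _),
    intervalIntegral.integral_add (hint2.const_mul _) (hint1.const_mul _),
    intervalIntegral.integral_const_mul, intervalIntegral.integral_const_mul,
    intervalIntegral.integral_const_mul] at hFTC
  rw [Q, R]
  linear_combination hFTC

lemma hasDerivAt_P1 {c : ℂ} (hc : c ∈ U) : HasDerivAt P1 (Q c) c := (d1 hc).2

lemma hasDerivAt_Q {c : ℂ} (hc : c ∈ U) : HasDerivAt Q (R c) c := (d2 hc).2

lemma derivP1 {c : ℂ} (hc : c ∈ U) : deriv P1 c = Q c := (hasDerivAt_P1 hc).deriv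

lemma deriv2P1 {c : ℂ} (hc : c ∈ U) : deriv (deriv P1) c = R c := by
  have hev : deriv P1 =ᶠ[nhds c] Q := by
    filter_upwards [isOpen_U.mem_nhds hc] with z hz using derivP1 hz
  rw [hev.deriv_eq]
  exact (hasDerivAt_Q hc).deriv

end EP

/-- For `c ∈ ℂ \ ℝ_{≥0}`, the improper integral `P₁(c)` converges and satisfies the
hypergeometric differential equation `c(1-c)P'' + (1-2c)P' - (1/4)P = 0`. -/
theorem stmt0 (c : ℂ) (hc : ∀ r : ℝ, 0 ≤ r → c ≠ (r : ℂ)) :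
    IntegrableOn
      (fun x : ℝ => ((x : ℂ) * (1 - (x : ℂ)) * (1 - c * (x : ℂ))) ^ (-(1/2 : ℂ)))
      (Set.Ioo 0 1) ∧
    c * (1 - c) * deriv (deriv P1) c + (1 - 2 * c) * deriv P1 c - (1/4) * P1 c = 0 := by
  have hcU : c ∈ EP.U := hc
  constructor
  · have h := EP.intF0' hcU
    have h2 := (intervalIntegrable_iff_integrableOn_Ioc_of_le zero_le_one).mp h
    exact h2.mono_set Set.Ioo_subset_Ioc_self
  · rw [EP.deriv2P1 hcU, EP.derivP1 hcU]
    have h := EP.sum_zero hcU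
    have hP : P1 c = ∫ x in (0:ℝ)..1, EP.F0 c x := rfl
    rw [hP]
    linear_combination h
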